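/- For every fixed r ≥ 1, there exist constants c_r and d_r such that P(d + r, d) = c_r for all d ≥ d_r. -/

import Mathlib

/-- The Chebyshev distance between two permutations of `{1,…,n}`
(represented as permutations of `Fin n`): `max_i |σ(i) − τ(i)|`. -/
def permDist {n : ℕ} (σ τ : Equiv.Perm (Fin n)) : ℕ :=
  Finset.univ.sup fun i => Nat.dist (σ i : ℕ) (τ i : ℕ)

/-- `P n d` is the maximum cardinality of a set of permutations of `{1,…,n}`
whose pairwise Chebyshev distance is at least `d`. -/
noncomputable def P (n d : ℕ) : ℕ :=
  sSup {k | ∃ A : Finset (Equiv.Perm (Fin n)),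
    (∀ σ ∈ A, ∀ τ ∈ A, σ ≠ τ → d ≤ permDist σ τ) ∧ A.card = k}

/-- Recursive bound used in the pigeonhole argument. -/
def gB : ℕ → ℕ
  | 0 => 1
  | (t+1) => (t+1)*(t+1) * gB t + 1

lemma exists_witness {n d : ℕ} (hd : 1 ≤ d) {σ τ : Equiv.Perm (Fin n)}
    (h : d ≤ permDist σ τ) : ∃ i, d ≤ Nat.dist (σ i : ℕ) (τ i : ℕ) := by
  unfold permDist at h
  obtain ⟨i, -, hi⟩ := (Finset.le_sup_iff (show (⊥:ℕ) < d from hd)).mp h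
  exact ⟨i, hi⟩

lemma witness_mem {n d r : ℕ} (hd : 1 ≤ d) (hn : n = d + r)
    {σ τ : Equiv.Perm (Fin n)} {W : Finset (Fin n)}
    (hW : ∀ v ∈ W, σ⁻¹ v = τ⁻¹ v) (hfar : d ≤ permDist σ τ) :
    ∃ i, ((σ i : ℕ) < r ∨ d ≤ (σ i : ℕ)) ∧ ((τ i : ℕ) < r ∨ d ≤ (τ i : ℕ)) ∧
      σ i ∉ W ∧ τ i ∉ W := by
  obtain ⟨i, hi⟩ := exists_witness hd hfar
  have h1 : (σ i : ℕ) < d + r := hn ▸ (σ i).isLt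
  have h2 : (τ i : ℕ) < d + r := hn ▸ (τ i).isLt
  simp only [Nat.dist] at hi
  have hne : σ i ≠ τ i := by
    intro h
    rw [h] at hi
    omega
  refine ⟨i, by omega, by omega, ?_, ?_⟩
  · intro hmem
    have h3 := hW _ hmem
    rw [Equiv.Perm.coe_inv, Equiv.symm_apply_apply] at h3
    have h4 : τ (τ⁻¹ (σ i)) = τ i := by rw [← h3]
    rw [Equiv.Perm.coe_inv, Equiv.apply_symm_apply] at h4
    exact hne h4
  · intro hmem
    have h3 := hW _ hmem
    rw [Equiv.Perm.coe_inv τ, Equiv.symm_apply_apply] at h3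
    have h4 : σ (σ⁻¹ (τ i)) = σ i := by rw [h3]
    rw [Equiv.Perm.coe_inv, Equiv.apply_symm_apply] at h4
    exact hne h4.symm

lemma pin (n d r : ℕ) (hd : 1 ≤ d) (hn : n = d + r) :
    ∀ t : ℕ, ∀ (B : Finset (Equiv.Perm (Fin n))) (W : Finset (Fin n)),
      ((Finset.univ.filter (fun v : Fin n => (v:ℕ) < r ∨ d ≤ (v:ℕ))) \ W).card ≤ t →
      (∀ σ ∈ B, ∀ τ ∈ B, ∀ v ∈ W, σ⁻¹ v = τ⁻¹ v) →
      (∀ σ ∈ B, ∀ τ ∈ B, σ ≠ τ → d ≤ permDist σ τ) →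
      B.card ≤ gB t := by
  intro t
  induction t with
  | zero =>
    intro B W hcard hagree hfar
    have hsub : (Finset.univ.filter (fun v : Fin n => (v:ℕ) < r ∨ d ≤ (v:ℕ))) \ W = ∅ :=
      Finset.card_eq_zero.mp (Nat.le_zero.mp hcard)
    show B.card ≤ 1
    refine Finset.card_le_one.mpr fun σ hσ τ hτ => ?_
    by_contra hne
    obtain ⟨i, hx1, _, hx3, _⟩ := witness_mem hd hn (hagree σ hσ τ hτ) (hfar σ hσ τ hτ hne)
    have hmem : σ i ∈ (Finset.univ.filter (fun v : Fin n => (v:ℕ) < r ∨ d ≤ (v:ℕ))) \ W :=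
      Finset.mem_sdiff.mpr ⟨Finset.mem_filter.mpr ⟨Finset.mem_univ _, hx1⟩, hx3⟩
    rw [hsub] at hmem
    exact absurd hmem (Finset.notMem_empty _)
  | succ t ih =>
    intro B W hcard hagree hfar
    rcases B.eq_empty_or_nonempty with rfl | ⟨τ₀, hτ₀⟩
    · simp
    set D := (Finset.univ.filter (fun v : Fin n => (v:ℕ) < r ∨ d ≤ (v:ℕ))) \ W with hD
    have cover : B ⊆ insert τ₀ ((D ×ˢ D).biUnion fun xu =>
        B.filter fun τ => τ (τ₀⁻¹ xu.1) = xu.2) := by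
      intro τ hτ
      rcases eq_or_ne τ τ₀ with rfl | hne
      · exact Finset.mem_insert_self _ _
      · obtain ⟨i, hx1, hx2, hx3, hx4⟩ :=
          witness_mem hd hn (hagree τ₀ hτ₀ τ hτ) (hfar τ₀ hτ₀ τ hτ (Ne.symm hne))
        refine Finset.mem_insert_of_mem (Finset.mem_biUnion.mpr ⟨(τ₀ i, τ i), ?_, ?_⟩)
        · exact Finset.mem_product.mpr
            ⟨Finset.mem_sdiff.mpr ⟨Finset.mem_filter.mpr ⟨Finset.mem_univ _, hx1⟩, hx3⟩,
             Finset.mem_sdiff.mpr ⟨Finset.mem_filter.mpr ⟨Finset.mem_univ _, hx2⟩, hx4⟩⟩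
        · exact Finset.mem_filter.mpr ⟨hτ, by simp⟩
    have hclass : ∀ xu ∈ D ×ˢ D,
        (B.filter fun τ => τ (τ₀⁻¹ xu.1) = xu.2).card ≤ gB t := by
      rintro ⟨x, u⟩ hxu
      have hu : u ∈ D := (Finset.mem_product.mp hxu).2
      apply ih _ (insert u W)
      · rw [Finset.sdiff_insert, ← hD, Finset.card_erase_of_mem hu]
        omega
      · intro σ hσ τ hτ v hv
        rcases Finset.mem_insert.mp hv with rfl | hv
        · have h1 : σ (τ₀⁻¹ x) = v := (Finset.mem_filter.mp hσ).2
          have h2 : τ (τ₀⁻¹ x) = v := (Finset.mem_filter.mp hτ).2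
          have e1 : σ⁻¹ v = τ₀⁻¹ x := by rw [← h1, Equiv.Perm.coe_inv, Equiv.symm_apply_apply]
          have e2 : τ⁻¹ v = τ₀⁻¹ x := by rw [← h2, Equiv.Perm.coe_inv, Equiv.symm_apply_apply]
          rw [e1, e2]
        · exact hagree σ (Finset.mem_of_mem_filter _ hσ) τ (Finset.mem_of_mem_filter _ hτ) v hv
      · intro σ hσ τ hτ hne
        exact hfar σ (Finset.mem_of_mem_filter _ hσ) τ (Finset.mem_of_mem_filter _ hτ) hne
    calc B.card ≤ (insert τ₀ ((D ×ˢ D).biUnion fun xu =>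
            B.filter fun τ => τ (τ₀⁻¹ xu.1) = xu.2)).card := Finset.card_le_card cover
      _ ≤ ((D ×ˢ D).biUnion fun xu =>
            B.filter fun τ => τ (τ₀⁻¹ xu.1) = xu.2).card + 1 := Finset.card_insert_le _ _
      _ ≤ (∑ xu ∈ D ×ˢ D, (B.filter fun τ => τ (τ₀⁻¹ xu.1) = xu.2).card) + 1 :=
            Nat.add_le_add_right (Finset.card_biUnion_le) 1
      _ ≤ (D ×ˢ D).card * gB t + 1 := by
            have := Finset.sum_le_card_nsmul (D ×ˢ D) _ (gB t) hclass
            simpa [smul_eq_mul] using Nat.add_le_add_right this 1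
      _ ≤ (t+1)*(t+1) * gB t + 1 := by
            rw [Finset.card_product]
            exact Nat.add_le_add_right
              (Nat.mul_le_mul (Nat.mul_le_mul hcard hcard) le_rfl) 1
      _ = gB (t+1) := rfl

lemma extreme_card (n d r : ℕ) (hn : n = d + r) :
    (Finset.univ.filter fun v : Fin n => (v:ℕ) < r ∨ d ≤ (v:ℕ)).card ≤ 2 * r := by
  set E := Finset.univ.filter fun v : Fin n => (v:ℕ) < r ∨ d ≤ (v:ℕ) with hE
  have h1 : E.card = (E.image Fin.val).card :=
    (Finset.card_image_of_injective _ Fin.val_injective).symm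
  have h2 : E.image Fin.val ⊆ Finset.range r ∪ Finset.Ico d n := by
    intro x hx
    obtain ⟨v, hv, rfl⟩ := Finset.mem_image.mp hx
    have hv' := (Finset.mem_filter.mp hv).2
    have := v.isLt
    rcases hv' with h | h
    · exact Finset.mem_union_left _ (Finset.mem_range.mpr h)
    · exact Finset.mem_union_right _ (Finset.mem_Ico.mpr ⟨h, this⟩)
  calc E.card = (E.image Fin.val).card := h1
    _ ≤ (Finset.range r ∪ Finset.Ico d n).card := Finset.card_le_card h2
    _ ≤ (Finset.range r).card + (Finset.Ico d n).card := Finset.card_union_le _ _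
    _ ≤ 2 * r := by rw [Finset.card_range, Nat.card_Ico]; omega

lemma P_bddAbove (n d : ℕ) : BddAbove {k | ∃ A : Finset (Equiv.Perm (Fin n)),
    (∀ σ ∈ A, ∀ τ ∈ A, σ ≠ τ → d ≤ permDist σ τ) ∧ A.card = k} := by
  refine ⟨Fintype.card (Equiv.Perm (Fin n)), ?_⟩
  rintro k ⟨A, -, rfl⟩
  exact Finset.card_le_univ A

lemma P_nonempty (n d : ℕ) : Set.Nonempty {k | ∃ A : Finset (Equiv.Perm (Fin n)),
    (∀ σ ∈ A, ∀ τ ∈ A, σ ≠ τ → d ≤ permDist σ τ) ∧ A.card = k} :=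
  ⟨0, ∅, by simp, rfl⟩

lemma P_le (n d C : ℕ)
    (h : ∀ A : Finset (Equiv.Perm (Fin n)),
      (∀ σ ∈ A, ∀ τ ∈ A, σ ≠ τ → d ≤ permDist σ τ) → A.card ≤ C) :
    P n d ≤ C := by
  apply csSup_le (P_nonempty n d)
  rintro k ⟨A, hA, rfl⟩
  exact h A hA

lemma P_bound (d r : ℕ) (hd : 1 ≤ d) : P (d + r) d ≤ gB (2 * r) := by
  apply P_le
  intro A hA
  apply pin (d + r) d r hd rfl (2 * r) A ∅
  · rw [Finset.sdiff_empty]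
    exact extreme_card (d + r) d r rfl
  · intro σ _ τ _ v hv
    exact absurd hv (Finset.notMem_empty _)
  · exact hA

lemma P_step (n d r : ℕ) (hd : 1 ≤ d) (hrd : r ≤ d) (hn : n = d + r) :
    P n d ≤ P (n + 1) (d + 1) := by
  apply csSup_le_csSup (P_bddAbove (n+1) (d+1)) (P_nonempty n d)
  rintro k ⟨A, hA, rfl⟩
  have hrn : r < n + 1 := by omega
  set p : Fin (n+1) := ⟨r, hrn⟩ with hp
  set f : Equiv.Perm (Fin n) → Equiv.Perm (Fin (n+1)) := fun σ =>
    (finSuccEquiv' p).trans ((Equiv.optionCongr σ).trans (finSuccEquiv' p).symm) with hf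
  have hfeval : ∀ (σ : Equiv.Perm (Fin n)) (x : Fin n),
      f σ (p.succAbove x) = p.succAbove (σ x) := by
    intro σ x
    simp [hf, finSuccEquiv'_succAbove, finSuccEquiv'_symm_some]
  have hval : ∀ x : Fin n, (p.succAbove x : ℕ) =
      if (x:ℕ) < r then (x:ℕ) else (x:ℕ) + 1 := by
    intro x
    simp only [Fin.succAbove, Fin.lt_def, Fin.coe_castSucc, hp]
    split_ifs <;> simp
  have hfinj : Function.Injective f := by
    intro σ τ h
    ext x
    have h2 : f σ (p.succAbove x) = f τ (p.succAbove x) := by rw [h]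
    rw [hfeval, hfeval] at h2
    exact congrArg Fin.val (Fin.succAbove_right_injective h2)
  refine ⟨A.image f, ?_, by rw [Finset.card_image_of_injective _ hfinj]⟩
  intro σ' hσ' τ' hτ' hne
  obtain ⟨σ, hσ, rfl⟩ := Finset.mem_image.mp hσ'
  obtain ⟨τ, hτ, rfl⟩ := Finset.mem_image.mp hτ'
  have hστ : σ ≠ τ := fun h => hne (by rw [h])
  obtain ⟨i, hi⟩ := exists_witness hd (hA σ hσ τ hτ hστ)
  have key : d + 1 ≤ Nat.dist ((f σ) (p.succAbove i) : ℕ) ((f τ) (p.succAbove i) : ℕ) := by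
    rw [hfeval, hfeval, hval, hval]
    have h1 : (σ i : ℕ) < d + r := hn ▸ (σ i).isLt
    have h2 : (τ i : ℕ) < d + r := hn ▸ (τ i).isLt
    simp only [Nat.dist] at hi ⊢
    split_ifs <;> omega
  refine key.trans ?_
  unfold permDist
  exact Finset.le_sup (f := fun j => Nat.dist ((f σ) j : ℕ) ((f τ) j : ℕ))
    (Finset.mem_univ (p.succAbove i))

theorem stmt13 (r : ℕ) (hr : 1 ≤ r) :
    ∃ c dr : ℕ, ∀ d : ℕ, dr ≤ d → P (d + r) d = c := by
  have hstep : ∀ d, r ≤ d → P (d + r) d ≤ P (d + 1 + r) (d + 1) := by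
    intro d hd
    have h := P_step (d + r) d r (le_trans hr hd) hd rfl
    have e : d + r + 1 = d + 1 + r := by omega
    rwa [e] at h
  have hmono : ∀ d₁ d₂, r ≤ d₁ → d₁ ≤ d₂ → P (d₁ + r) d₁ ≤ P (d₂ + r) d₂ := by
    intro d₁ d₂ h1 h2
    induction d₂, h2 using Nat.le_induction with
    | base => exact le_rfl
    | succ d hd ihd => exact le_trans ihd (hstep d (le_trans h1 hd))
  have hbound : ∀ d, r ≤ d → P (d + r) d ≤ gB (2 * r) := fun d hd =>
    P_bound d r (le_trans hr hd)
  set T : Set ℕ := {m | ∃ k : ℕ, P (r + k + r) (r + k) = m} with hT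
  have hTne : T.Nonempty := ⟨_, 0, rfl⟩
  have hTbdd : BddAbove T := by
    refine ⟨gB (2 * r), ?_⟩
    rintro m ⟨k, rfl⟩
    exact hbound _ (Nat.le_add_right r k)
  obtain ⟨k₀, hk₀⟩ := Nat.sSup_mem hTne hTbdd
  refine ⟨sSup T, r + k₀, fun d hd => ?_⟩
  have hrd : r ≤ d := le_trans (Nat.le_add_right r k₀) hd
  apply le_antisymm
  · apply le_csSup hTbdd
    refine ⟨d - r, ?_⟩
    have e : r + (d - r) = d := by omega
    rw [e]
  · rw [← hk₀]
    exact hmono (r + k₀) d (Nat.le_add_right r k₀) hd
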